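/- Fix 0 < m < M and an integer n ≥ 1. For t = 0, …, n−1 let λ_t = (M+m)/2 + ((M−m)/2)·cos((2t+1)π/(2n)) and define the Chebyshev stepsizes α_t = 1/λ_t. Then for every dimension d, every real symmetric d×d matrix H with mI ⪯ H ⪯ MI, and every x_0 ∈ ℝ^d, the gradient descent iterates for f(x) = (1/2)xᵀHx, namely x_{t+1} = (I − α_t H) x_t, satisfy ‖x_n‖ ≤ ‖x_0‖ / T_n((M+m)/(M−m)), where T_n is the degree-n Chebyshev polynomial of the first kind. -/

import Mathlib

open Polynomial Polynomial.Chebyshev Real Finset Matrix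

lemma chebT_deg_coeff : ∀ k : ℕ, (T ℝ (k:ℤ)).natDegree ≤ k ∧
    (1 ≤ k → (T ℝ (k:ℤ)).coeff k = 2^(k-1)) := by
  intro k
  induction k using Nat.strong_induction_on with
  | _ k ih =>
    match k with
    | 0 => simp [T_zero]
    | 1 => simp [T_one]
    | (k+2) =>
      have h1 := ih (k+1) (by omega)
      have h0 := ih k (by omega)
      have hT : (T ℝ ((k+2:ℕ):ℤ)) = 2 * X * T ℝ ((k+1:ℕ):ℤ) - T ℝ (k:ℤ) := by
        push_cast
        exact T_add_two ℝ k
      have h2 : (2 : ℝ[X]) = C 2 := (map_ofNat Polynomial.C 2).symm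
      constructor
      · rw [hT]
        refine le_trans (natDegree_sub_le _ _) (max_le ?_ (h0.1.trans (by omega)))
        refine le_trans (natDegree_mul_le) ?_
        have : (2 * X : ℝ[X]).natDegree ≤ 1 := by
          rw [h2]; exact le_trans natDegree_mul_le (by simp)
        omega
      · intro _
        rw [hT, coeff_sub, mul_assoc, h2, coeff_C_mul, coeff_X_mul,
          h1.2 (by omega), coeff_eq_zero_of_natDegree_lt (by omega)]
        simp [pow_succ]
        ring

lemma cheb_prod (n : ℕ) (hn : 1 ≤ n) :
    T ℝ (n:ℤ) = C ((2:ℝ)^(n-1)) *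
      ∏ t ∈ range n, (X - C (Real.cos ((2*t+1) * Real.pi / (2*n)))) := by
  have hπ := Real.pi_pos
  have hn' : (0:ℝ) < n := by exact_mod_cast hn
  set f : ℕ → ℝ := fun t => Real.cos ((2*t+1) * Real.pi / (2*n)) with hf
  -- injectivity
  have hmem : ∀ t < n, (2*(t:ℝ)+1) * Real.pi / (2*n) ∈ Set.Icc 0 Real.pi := by
    intro t ht
    constructor
    · positivity
    · rw [div_le_iff₀ (by positivity)]
      have : (2*(t:ℝ)+1) ≤ 2*n := by
        have : (t:ℝ) + 1 ≤ n := by exact_mod_cast ht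
        linarith
      nlinarith
  have hinj : Set.InjOn f (range n) := by
    intro s hs t ht hst
    simp only [mem_coe, mem_range] at hs ht
    have h1 := hmem s hs
    have h2 := hmem t ht
    have : (2*(s:ℝ)+1) * Real.pi / (2*n) = (2*(t:ℝ)+1) * Real.pi / (2*n) := by
      apply Real.injOn_cos h1 h2
      simpa [hf, mul_comm] using hst
    field_simp at this
    have h : (s:ℝ) = t := by linarith
    exact_mod_cast h
  -- roots
  have hroot : ∀ t < n, (T ℝ (n:ℤ)).eval (f t) = 0 := by
    intro t ht
    rw [hf]
    simp only
    rw [T_real_cos]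
    have harg : ((n:ℤ):ℝ) * ((2*t+1) * Real.pi / (2*n)) = (2*(t:ℤ)+1) * Real.pi / 2 := by
      push_cast
      field_simp
    rw [harg]
    exact Real.cos_eq_zero_iff.2 ⟨t, rfl⟩
  set P : ℝ[X] := C ((2:ℝ)^(n-1)) * ∏ t ∈ range n, (X - C (f t)) with hP
  have hProdMonic : (∏ t ∈ range n, (X - C (f t))).Monic :=
    monic_prod_of_monic _ _ (fun t _ => monic_X_sub_C _)
  have hProdDeg : (∏ t ∈ range n, (X - C (f t))).natDegree = n := by
    rw [natDegree_prod _ _ (fun t _ => X_sub_C_ne_zero _)]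
    simp
  have hPdeg : P.natDegree ≤ n := by
    rw [hP]
    refine le_trans natDegree_mul_le ?_
    simp [hProdDeg]
  have hPcoeff : P.coeff n = (2:ℝ)^(n-1) := by
    have hc := Monic.coeff_natDegree hProdMonic
    rw [hProdDeg] at hc
    rw [hP, coeff_C_mul, hc, mul_one]
  have hProot : ∀ t < n, P.eval (f t) = 0 := by
    intro t ht
    rw [hP]
    simp only [eval_mul, eval_prod, eval_sub, eval_X, eval_C]
    rw [Finset.prod_eq_zero (Finset.mem_range.2 ht) (by ring)]
    ring
  set Q := T ℝ (n:ℤ) - P with hQ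
  have hQzero : Q = 0 := by
    by_cases h : Q = 0
    · exact h
    refine eq_zero_of_natDegree_lt_card_of_eval_eq_zero' Q ((range n).image f) ?_ ?_
    · intro y hy
      obtain ⟨t, ht, rfl⟩ := Finset.mem_image.1 hy
      rw [hQ]
      simp [hroot t (mem_range.1 ht), hProot t (mem_range.1 ht)]
    · rw [Finset.card_image_of_injOn hinj, Finset.card_range]
      have hle : Q.natDegree ≤ n :=
        le_trans (natDegree_sub_le _ _) (max_le (chebT_deg_coeff n).1 hPdeg)
      have hcoeff : Q.coeff n = 0 := by
        rw [hQ, coeff_sub, (chebT_deg_coeff n).2 hn, hPcoeff, sub_self]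
      rcases lt_or_eq_of_le hle with h' | h'
      · exact h'
      · exfalso
        apply leadingCoeff_ne_zero.2 h
        rw [leadingCoeff, h', hcoeff]
  have := sub_eq_zero.1 hQzero
  simpa [hP] using this

lemma cheb_eval (n : ℕ) (hn : 1 ≤ n) (x : ℝ) :
    (T ℝ (n:ℤ)).eval x = (2:ℝ)^(n-1) *
      ∏ t ∈ range n, (x - Real.cos ((2*t+1) * Real.pi / (2*n))) := by
  rw [cheb_prod n hn]
  simp [eval_prod]

lemma cheb_pos (n : ℕ) (hn : 1 ≤ n) {ρ : ℝ} (hρ : 1 < ρ) :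
    0 < (T ℝ (n:ℤ)).eval ρ := by
  rw [cheb_eval n hn]
  apply mul_pos (by positivity)
  apply Finset.prod_pos
  intro t _
  have := Real.cos_le_one ((2*(t:ℝ)+1) * Real.pi / (2*n))
  linarith

lemma cheb_reflect (n : ℕ) (hn : 1 ≤ n) (ρ : ℝ) :
    ∏ t ∈ range n, (ρ + Real.cos ((2*t+1) * Real.pi / (2*n)))
      = ∏ t ∈ range n, (ρ - Real.cos ((2*t+1) * Real.pi / (2*n))) := by
  rw [← Finset.prod_range_reflect (fun t => ρ - Real.cos ((2*t+1) * Real.pi / (2*n))) n]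
  apply Finset.prod_congr rfl
  intro t ht
  rw [mem_range] at ht
  have hcast : ((n - 1 - t : ℕ) : ℝ) = (n:ℝ) - 1 - t := by
    have h1 : t ≤ n - 1 := by omega
    push_cast [Nat.cast_sub h1, Nat.cast_sub hn]
    ring
  rw [hcast]
  have hn' : (n:ℝ) ≠ 0 := by positivity
  have harg : (2*((n:ℝ) - 1 - t)+1) * Real.pi / (2*n)
      = Real.pi - (2*(t:ℝ)+1) * Real.pi / (2*n) := by
    field_simp
    ring
  rw [harg, Real.cos_pi_sub]
  ring

lemma cheb_scalar (m M : ℝ) (hm : 0 < m) (hmM : m < M) (n : ℕ) (hn : 1 ≤ n) (α : ℕ → ℝ)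
    (hα : ∀ t < n, α t =
      1 / ((M + m) / 2 + (M - m) / 2 * Real.cos ((2 * t + 1) * Real.pi / (2 * n))))
    (μ : ℝ) (hμ1 : m ≤ μ) (hμ2 : μ ≤ M) :
    |∏ t ∈ range n, (1 - α t * μ)| ≤ 1 / (T ℝ (n:ℤ)).eval ((M + m) / (M - m)) := by
  have hMm : (0:ℝ) < M - m := by linarith
  have h2p : ((2:ℝ)^(n-1)) ≠ 0 := by positivity
  set θ : ℕ → ℝ := fun t => (2*t+1) * Real.pi / (2*n) with hθ
  have hlampos : ∀ t, 0 < (M + m) / 2 + (M - m) / 2 * Real.cos (θ t) := by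
    intro t
    have h1 := Real.neg_one_le_cos (θ t)
    have h2 := Real.cos_le_one (θ t)
    nlinarith
  have hρ : 1 < (M + m) / (M - m) := by
    rw [lt_div_iff₀ hMm]; linarith
  have hT := cheb_pos n hn hρ
  set y : ℝ := (2*μ - (M+m)) / (M-m) with hy
  have hy1 : -1 ≤ y := by rw [hy, le_div_iff₀ hMm]; linarith
  have hy2 : y ≤ 1 := by rw [hy, div_le_iff₀ hMm]; linarith
  have hprody : ∏ t ∈ range n, (y - Real.cos (θ t)) = (T ℝ (n:ℤ)).eval y / 2^(n-1) := by
    rw [cheb_eval n hn y, mul_div_cancel_left₀ _ h2p]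
  have hprodρ : ∏ t ∈ range n, ((M + m) / (M - m) - Real.cos (θ t))
      = (T ℝ (n:ℤ)).eval ((M + m) / (M - m)) / 2^(n-1) := by
    rw [cheb_eval n hn, mul_div_cancel_left₀ _ h2p]
  have hprod : ∏ t ∈ range n, (1 - α t * μ)
      = (∏ t ∈ range n, ((M + m) / 2 + (M - m) / 2 * Real.cos (θ t) - μ)) /
        (∏ t ∈ range n, ((M + m) / 2 + (M - m) / 2 * Real.cos (θ t))) := by
    rw [← Finset.prod_div_distrib]
    apply Finset.prod_congr rfl
    intro t ht
    have hl := (hlampos t).ne'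
    have hl2 : M + m + (M - m) * Real.cos (θ t) ≠ 0 := by
      have := hlampos t; intro h; rw [show (M + m) / 2 + (M - m) / 2 * Real.cos (θ t)
        = (M + m + (M - m) * Real.cos (θ t)) / 2 by ring, h] at this; simp at this
    rw [hα t (mem_range.1 ht)]
    show 1 - 1 / ((M + m) / 2 + (M - m) / 2 * Real.cos (θ t)) * μ = _
    field_simp
  have hnum : ∏ t ∈ range n, ((M + m) / 2 + (M - m) / 2 * Real.cos (θ t) - μ)
      = (-((M-m)/2))^n * ((T ℝ (n:ℤ)).eval y / 2^(n-1)) := by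
    have hfac : ∀ t ∈ range n, (M + m) / 2 + (M - m) / 2 * Real.cos (θ t) - μ
        = (-((M-m)/2)) * (y - Real.cos (θ t)) := by
      intro t ht
      rw [hy]
      field_simp
      ring
    rw [Finset.prod_congr rfl hfac, Finset.prod_mul_distrib, Finset.prod_const,
      Finset.card_range, hprody]
  have hden : ∏ t ∈ range n, ((M + m) / 2 + (M - m) / 2 * Real.cos (θ t))
      = ((M-m)/2)^n * ((T ℝ (n:ℤ)).eval ((M + m) / (M - m)) / 2^(n-1)) := by
    have hfac : ∀ t ∈ range n, (M + m) / 2 + (M - m) / 2 * Real.cos (θ t)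
        = ((M-m)/2) * ((M + m) / (M - m) + Real.cos (θ t)) := by
      intro t ht
      field_simp
    rw [Finset.prod_congr rfl hfac, Finset.prod_mul_distrib, Finset.prod_const,
      Finset.card_range, cheb_reflect n hn, hprodρ]
  have hTy : |(T ℝ (n:ℤ)).eval y| ≤ 1 := by
    have h := (Real.cos_arccos hy1 hy2).symm
    rw [h, T_real_cos]
    exact Real.abs_cos_le_one _
  rw [hprod, hnum, hden, abs_div, abs_mul, abs_mul, abs_pow, abs_pow, abs_neg,
    abs_of_nonneg (by positivity : (0:ℝ) ≤ (M-m)/2), abs_div, abs_div,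
    abs_of_nonneg (by positivity : (0:ℝ) ≤ (2:ℝ)^(n-1)),
    abs_of_pos hT]
  rw [div_le_div_iff₀ (by positivity) hT]
  have h1 : (0:ℝ) ≤ ((M-m)/2)^n := by positivity
  have h2 : (0:ℝ) < (2:ℝ)^(n-1) := by positivity
  have key : ((M-m)/2)^n * (|(T ℝ (n:ℤ)).eval y| / 2^(n-1)) ≤ ((M-m)/2)^n * (1 / 2^(n-1)) := by
    gcongr
  calc ((M-m)/2)^n * (|(T ℝ (n:ℤ)).eval y| / 2^(n-1)) * (T ℝ (n:ℤ)).eval ((M+m)/(M-m))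
      ≤ ((M-m)/2)^n * (1 / 2^(n-1)) * (T ℝ (n:ℤ)).eval ((M+m)/(M-m)) :=
        mul_le_mul_of_nonneg_right key (le_of_lt hT)
      _ = 1 * (((M-m)/2)^n * ((T ℝ (n:ℤ)).eval ((M+m)/(M-m)) / 2^(n-1))) := by ring

/-- **Chebyshev stepsizes for quadratic optimization** (Young 1953): with
`λ_t = (M+m)/2 + ((M−m)/2)·cos((2t+1)π/(2n))` and stepsizes `α_t = 1/λ_t`, gradient
descent on any quadratic `f(x) = ½xᵀHx` with `H` symmetric and `mI ⪯ H ⪯ MI` satisfies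
`‖xₙ‖ ≤ ‖x₀‖ / Tₙ((M+m)/(M−m))`, where `Tₙ` is the Chebyshev polynomial of the first
kind. -/
theorem chebyshev_stepsizes_quadratic (m M : ℝ) (hm : 0 < m) (hmM : m < M)
    (n : ℕ) (hn : 1 ≤ n) (α : ℕ → ℝ)
    (hα : ∀ t < n, α t =
      1 / ((M + m) / 2 + (M - m) / 2 * Real.cos ((2 * t + 1) * Real.pi / (2 * n)))) :
    ∀ (d : ℕ) (H : Matrix (Fin d) (Fin d) ℝ),
      H.IsSymm →
      (H - m • (1 : Matrix (Fin d) (Fin d) ℝ)).PosSemidef →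
      (M • (1 : Matrix (Fin d) (Fin d) ℝ) - H).PosSemidef →
      ∀ x : ℕ → EuclideanSpace ℝ (Fin d),
        (∀ t, x (t + 1) = x t - α t • Matrix.toEuclideanLin H (x t)) →
        ‖x n‖ ≤ ‖x 0‖ / (Polynomial.Chebyshev.T ℝ (n : ℤ)).eval ((M + m) / (M - m)) := by
  intro d H hsym hp1 hp2 x hx
  have hMm : (0:ℝ) < M - m := by linarith
  have hρ : 1 < (M + m) / (M - m) := by rw [lt_div_iff₀ hMm]; linarith
  have hT := cheb_pos n hn hρ
  have hH : H.IsHermitian := by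
    rwa [Matrix.IsHermitian, Matrix.conjTranspose_eq_transpose_of_trivial]
  set v := hH.eigenvectorBasis with hv
  set μ := hH.eigenvalues with hμ
  -- eigenvector norms
  have hdot : ∀ i, (⇑(v i)) ⬝ᵥ (⇑(v i)) = 1 := by
    intro i
    have h1 : ‖v i‖ = 1 := v.orthonormal.1 i
    have h2 : ‖v i‖^2 = ∑ j, (v i j)^2 := by
      rw [EuclideanSpace.norm_eq, Real.sq_sqrt (by positivity)]
      exact Finset.sum_congr rfl fun j _ => by rw [Real.norm_eq_abs, sq_abs]
    have := h2.symm.trans (by rw [h1, one_pow])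
    simpa [dotProduct, pow_two] using this
  -- eigenvalue bounds
  have hbound : ∀ i, m ≤ μ i ∧ μ i ≤ M := by
    intro i
    have hmv := hH.mulVec_eigenvectorBasis i
    constructor
    · have h := hp1.dotProduct_mulVec_nonneg (⇑(v i))
      rw [Matrix.sub_mulVec, Matrix.smul_mulVec, Matrix.one_mulVec, hmv,
        star_trivial, dotProduct_sub, dotProduct_smul, dotProduct_smul, hdot i] at h
      simpa using h
    · have h := hp2.dotProduct_mulVec_nonneg (⇑(v i))
      rw [Matrix.sub_mulVec, Matrix.smul_mulVec, Matrix.one_mulVec, hmv,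
        star_trivial, dotProduct_sub, dotProduct_smul, dotProduct_smul, hdot i] at h
      simpa using h
  -- symmetric operator
  have hS : (Matrix.toEuclideanLin H).IsSymmetric :=
    Matrix.isHermitian_iff_isSymmetric.1 hH
  have hAv : ∀ i, Matrix.toEuclideanLin H (v i) = μ i • v i := by
    intro i
    have hmv := hH.mulVec_eigenvectorBasis i
    apply PiLp.ext
    intro j
    have := congrFun hmv j
    simpa [Matrix.toEuclideanLin_apply] using this
  have hrepr : ∀ (z : EuclideanSpace ℝ (Fin d)) i,
      v.repr (Matrix.toEuclideanLin H z) i = μ i * v.repr z i := by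
    intro z i
    rw [OrthonormalBasis.repr_apply_apply, OrthonormalBasis.repr_apply_apply,
      ← hS (v i) z, hAv i, real_inner_smul_left]
  -- coefficient recursion
  have hcoef : ∀ t i, v.repr (x t) i = (∏ s ∈ range t, (1 - α s * μ i)) * v.repr (x 0) i := by
    intro t
    induction t with
    | zero => simp
    | succ t ih =>
      intro i
      rw [hx t, map_sub, _root_.map_smul]
      have : (v.repr (x t) - α t • v.repr (Matrix.toEuclideanLin H (x t))) i
          = v.repr (x t) i - α t * v.repr (Matrix.toEuclideanLin H (x t)) i := rfl
      rw [this, hrepr, ih i, Finset.prod_range_succ]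
      ring
  -- norm computation
  have hnorm : ∀ z : EuclideanSpace ℝ (Fin d), ‖z‖^2 = ∑ i, (v.repr z i)^2 := by
    intro z
    rw [← v.repr.norm_map z, EuclideanSpace.norm_eq, Real.sq_sqrt (by positivity)]
    exact Finset.sum_congr rfl fun j _ => by rw [Real.norm_eq_abs, sq_abs]
  set c : ℝ := 1 / (T ℝ (n:ℤ)).eval ((M + m) / (M - m)) with hc
  have hcpos : 0 < c := by positivity
  have hsq : ‖x n‖^2 ≤ (c * ‖x 0‖)^2 := by
    rw [hnorm (x n), mul_pow, hnorm (x 0), Finset.mul_sum]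
    apply Finset.sum_le_sum
    intro i _
    rw [hcoef n i, mul_pow]
    apply mul_le_mul_of_nonneg_right _ (sq_nonneg _)
    have hb := cheb_scalar m M hm hmM n hn α hα (μ i) (hbound i).1 (hbound i).2
    calc (∏ s ∈ range n, (1 - α s * μ i))^2
        = |∏ s ∈ range n, (1 - α s * μ i)|^2 := (sq_abs _).symm
      _ ≤ c^2 := by
          apply pow_le_pow_left₀ (abs_nonneg _)
          rw [hc]; exact hb
  have : ‖x n‖ ≤ c * ‖x 0‖ := by
    have h1 : (0:ℝ) ≤ c * ‖x 0‖ := by positivity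
    nlinarith [norm_nonneg (x n)]
  calc ‖x n‖ ≤ c * ‖x 0‖ := this
    _ = ‖x 0‖ / (T ℝ (n:ℤ)).eval ((M + m) / (M - m)) := by rw [hc]; ring
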